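/- The function f(t) = (1/(2π²)) ∫₀^∞ p² (1/(|p²−1|+t) − 1/(p²+1+t)) dp is well-defined (the integral converges), positive, and strictly monotone decreasing for t > 0. -/

import Mathlib

open Real Set MeasureTheory

/-- `f(t) = (1/(2π²)) ∫₀^∞ p² (1/(|p²−1|+t) − 1/(p²+1+t)) dp`. -/
noncomputable def fInt (t : ℝ) : ℝ :=
  (1 / (2 * Real.pi ^ 2)) *
    ∫ p in Set.Ioi (0 : ℝ), p ^ 2 * (1 / (|p ^ 2 - 1| + t) - 1 / (p ^ 2 + 1 + t))

open Real Set MeasureTheory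

noncomputable def gAux (t p : ℝ) : ℝ :=
  p ^ 2 * (1 / (|p ^ 2 - 1| + t) - 1 / (p ^ 2 + 1 + t))

lemma denomA_pos {t p : ℝ} (ht : 0 < t) : 0 < |p ^ 2 - 1| + t := by positivity

lemma denomB_pos {t p : ℝ} (ht : 0 < t) : 0 < p ^ 2 + 1 + t := by positivity

lemma abs_lt_key {p : ℝ} (hp : 0 < p) : |p ^ 2 - 1| < p ^ 2 + 1 := by
  rw [abs_lt]
  constructor <;> nlinarith

lemma gAux_pos {t p : ℝ} (ht : 0 < t) (hp : 0 < p) : 0 < gAux t p := by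
  have h1 : |p ^ 2 - 1| + t < p ^ 2 + 1 + t := by linarith [abs_lt_key hp]
  have := one_div_lt_one_div_of_lt (denomA_pos ht (p := p)) h1
  have hpp : (0:ℝ) < p ^ 2 := by positivity
  have : 0 < 1 / (|p ^ 2 - 1| + t) - 1 / (p ^ 2 + 1 + t) := by linarith
  exact mul_pos hpp this

lemma gAux_cont {t : ℝ} (ht : 0 < t) : Continuous (gAux t) := by
  apply Continuous.mul (by continuity)
  apply Continuous.sub
  · exact continuous_const.div (by continuity) fun p => (denomA_pos ht).ne'
  · exact continuous_const.div (by continuity) fun p => (denomB_pos ht).ne'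

lemma gAux_anti {t₁ t₂ p : ℝ} (h1 : 0 < t₁) (h12 : t₁ < t₂) (hp : 0 < p) :
    gAux t₂ p < gAux t₁ p := by
  have h2 : 0 < t₂ := h1.trans h12
  set A := |p ^ 2 - 1|
  set B := p ^ 2 + 1
  have hAB : A < B := abs_lt_key hp
  have hA1 : 0 < A + t₁ := denomA_pos h1
  have hA2 : 0 < A + t₂ := denomA_pos h2
  have hB1 : 0 < B + t₁ := denomB_pos h1
  have hB2 : 0 < B + t₂ := denomB_pos h2
  have e : ∀ t : ℝ, 0 < A + t → 0 < B + t →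
      1 / (A + t) - 1 / (B + t) = (B - A) / ((A + t) * (B + t)) := by
    intro t ha hb
    field_simp
    ring
  unfold gAux
  rw [show p ^ 2 + 1 + t₁ = B + t₁ from rfl, show p ^ 2 + 1 + t₂ = B + t₂ from rfl,
    e t₁ hA1 hB1, e t₂ hA2 hB2]
  have hd : (A + t₁) * (B + t₁) < (A + t₂) * (B + t₂) := by nlinarith
  have := div_lt_div_of_pos_left (by linarith : (0:ℝ) < B - A)
    (mul_pos hA1 hB1) hd
  exact mul_lt_mul_of_pos_left this (by positivity)

lemma gAux_integrable {t : ℝ} (ht : 0 < t) : IntegrableOn (gAux t) (Ioi 0) := by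
  have hsplit : Ioi (0:ℝ) = Ioc 0 2 ∪ Ioi 2 := (Ioc_union_Ioi_eq_Ioi (by norm_num)).symm
  rw [hsplit]
  apply IntegrableOn.union
  · exact (gAux_cont ht).integrableOn_Ioc
  · have hbound : IntegrableOn (fun p : ℝ => 3 * p ^ (-2 : ℝ)) (Ioi 2) := by
      exact (integrableOn_Ioi_rpow_of_lt (by norm_num) (by norm_num)).const_mul 3
    apply Integrable.mono' hbound
    · exact ((gAux_cont ht).aestronglyMeasurable).restrict
    · filter_upwards [ae_restrict_mem measurableSet_Ioi] with p hp
      have hp2 : (2:ℝ) < p := hp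
      have hp0 : 0 < p := by linarith
      have hpp : (1:ℝ) ≤ p ^ 2 := by nlinarith
      have habs : |p ^ 2 - 1| = p ^ 2 - 1 := abs_of_nonneg (by linarith)
      have hA : 0 < p ^ 2 - 1 + t := by nlinarith
      have hB : 0 < p ^ 2 + 1 + t := by positivity
      rw [Real.norm_of_nonneg (gAux_pos ht hp0).le]
      rw [show (-2:ℝ) = -((2:ℕ):ℝ) by norm_num, Real.rpow_neg hp0.le,
        Real.rpow_natCast]
      unfold gAux
      rw [habs]
      have e : 1 / (p ^ 2 - 1 + t) - 1 / (p ^ 2 + 1 + t)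
          = 2 / ((p ^ 2 - 1 + t) * (p ^ 2 + 1 + t)) := by
        field_simp
        ring
      rw [e]
      have h4 : (4:ℝ) ≤ p ^ 2 := by nlinarith
      have key : 2 * (p ^ 2 * p ^ 2) ≤ 3 * ((p ^ 2 - 1 + t) * (p ^ 2 + 1 + t)) := by
        nlinarith [sq_nonneg t, mul_pos hp0 hp0]
      calc p ^ 2 * (2 / ((p ^ 2 - 1 + t) * (p ^ 2 + 1 + t)))
          = 2 * p ^ 2 / ((p ^ 2 - 1 + t) * (p ^ 2 + 1 + t)) := by ring
        _ ≤ 3 / p ^ 2 := by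
            rw [div_le_div_iff₀ (by positivity) (by positivity)]
            nlinarith
        _ = 3 * (p ^ 2)⁻¹ := by rw [div_eq_mul_inv]

lemma integral_pos_aux (h : ℝ → ℝ) (hint : IntegrableOn h (Ioi 0))
    (hpos : ∀ p ∈ Ioi (0:ℝ), 0 < h p) : 0 < ∫ p in Ioi (0:ℝ), h p := by
  rw [setIntegral_pos_iff_support_of_nonneg_ae ?_ hint]
  · refine lt_of_lt_of_le ?_ (measure_mono (?_ : Ioi (1:ℝ) ⊆ _))
    · simp [Real.volume_Ioi]
    · intro x hx
      have hx1 : (0:ℝ) < x := lt_trans one_pos hx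
      exact ⟨(hpos x hx1).ne', hx1⟩
  · filter_upwards [ae_restrict_mem measurableSet_Ioi] with p hp
    exact (hpos p hp).le

lemma fInt_eq (t : ℝ) : fInt t = (1 / (2 * Real.pi ^ 2)) * ∫ p in Ioi (0:ℝ), gAux t p := rfl

theorem fInt_welldefined_pos_strictAnti :
    (∀ t : ℝ, 0 < t →
      IntegrableOn (fun p : ℝ => p ^ 2 * (1 / (|p ^ 2 - 1| + t) - 1 / (p ^ 2 + 1 + t)))
        (Set.Ioi 0) volume ∧ 0 < fInt t) ∧
    StrictAntiOn fInt (Set.Ioi 0) := by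
  have hc : 0 < 1 / (2 * Real.pi ^ 2) := by positivity
  constructor
  · intro t ht
    refine ⟨gAux_integrable ht, ?_⟩
    rw [fInt_eq]
    exact mul_pos hc (integral_pos_aux _ (gAux_integrable ht) fun p hp => gAux_pos ht hp)
  · intro t₁ h1 t₂ h2 h12
    rw [mem_Ioi] at h1 h2
    rw [fInt_eq, fInt_eq]
    have key : 0 < ∫ p in Ioi (0:ℝ), (gAux t₁ p - gAux t₂ p) :=
      integral_pos_aux _ ((gAux_integrable h1).sub (gAux_integrable h2))
        fun p hp => sub_pos.2 (gAux_anti h1 h12 hp)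
    rw [integral_sub (gAux_integrable h1) (gAux_integrable h2)] at key
    have := mul_lt_mul_of_pos_left (by linarith :
      (∫ p in Ioi (0:ℝ), gAux t₂ p) < ∫ p in Ioi (0:ℝ), gAux t₁ p) hc
    exact this
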